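/- Let U_0 ∈ ℝ^{n×d} have orthonormal columns with ‖U_0‖_{2,∞} ≤ √(d/(n-r)) for some 0 ≤ r < n-d, let x ∈ ℝ^d satisfy ‖x‖_2 < 1, and let Ũ ∈ ℝ^{n×d} be the matrix of leading d left singular vectors of U_0 + e_i x^T. Then ‖Ũ‖_{2,∞} ≤ √(d/(n-r) + ‖x‖_2/(1-‖x‖_2)). -/

import Mathlib

open Matrix


private lemma cs_sum {m : ℕ} (f g : Fin m → ℝ) :
    (∑ j, f j * g j) ^ 2 ≤ (∑ j, f j ^ 2) * (∑ j, g j ^ 2) :=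
  Finset.sum_mul_sq_le_sq_mul_sq _ _ _

private lemma abs_sum_mul_le {m : ℕ} (f g : Fin m → ℝ) :
    |∑ j, f j * g j| ≤ Real.sqrt (∑ j, f j ^ 2) * Real.sqrt (∑ j, g j ^ 2) := by
  have h := cs_sum f g
  have h1 : |∑ j, f j * g j| = Real.sqrt ((∑ j, f j * g j) ^ 2) := (Real.sqrt_sq_eq_abs _).symm
  rw [h1, ← Real.sqrt_mul (by positivity)]
  exact Real.sqrt_le_sqrt h

private lemma arith_nw {t nw nz : ℝ} (ht0 : 0 ≤ t) (h1t : 0 < 1 - t) (hnw0 : 0 ≤ nw)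
    (hnz0 : 0 ≤ nz) (hnww : nw ^ 2 ≤ t * nz) (hlow : (1 - t) * nz ≤ nw) :
    nw ≤ t / (1 - t) := by
  rcases eq_or_lt_of_le hnw0 with h | h
  · rw [← h]; positivity
  · rw [le_div_iff₀ h1t]
    nlinarith

private lemma rev_triangle {m : ℕ} (a b : Fin m → ℝ) :
    Real.sqrt (∑ j, a j ^ 2) - Real.sqrt (∑ j, b j ^ 2) ≤
      Real.sqrt (∑ j, (a j + b j) ^ 2) := by
  set c := Real.sqrt (∑ j, a j ^ 2) with hc
  set e := Real.sqrt (∑ j, b j ^ 2) with he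
  have hc2 : c ^ 2 = ∑ j, a j ^ 2 := Real.sq_sqrt (by positivity)
  have he2 : e ^ 2 = ∑ j, b j ^ 2 := Real.sq_sqrt (by positivity)
  have hab : |∑ j, a j * b j| ≤ c * e := abs_sum_mul_le a b
  have hexp : ∑ j, (a j + b j) ^ 2 = (∑ j, a j ^ 2) + 2 * (∑ j, a j * b j) + ∑ j, b j ^ 2 := by
    rw [Finset.mul_sum, ← Finset.sum_add_distrib, ← Finset.sum_add_distrib]
    congr 1; ext j; ring
  have hge : (c - e) ^ 2 ≤ ∑ j, (a j + b j) ^ 2 := by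
    rw [hexp, ← hc2, ← he2]
    have := abs_le.mp hab
    nlinarith [this.1]
  calc c - e ≤ |c - e| := le_abs_self _
    _ = Real.sqrt ((c - e) ^ 2) := (Real.sqrt_sq_eq_abs _).symm
    _ ≤ _ := Real.sqrt_le_sqrt hge

private lemma proj_col_sq {n : ℕ} (Pm : Matrix (Fin n) (Fin n) ℝ) (hsym : Pmᵀ = Pm)
    (hidem : Pm * Pm = Pm) (k : Fin n) : ∑ l, Pm l k ^ 2 = Pm k k := by
  have h : ∀ l, Pm l k ^ 2 = Pm k l * Pm l k := by
    intro l
    have : Pm l k = Pm k l := by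
      calc Pm l k = Pmᵀ k l := rfl
        _ = Pm k l := by rw [hsym]
    rw [this]; ring
  rw [Finset.sum_congr rfl fun l _ => h l]
  have : ∑ l, Pm k l * Pm l k = (Pm * Pm) k k := (Matrix.mul_apply).symm
  rw [this, hidem]

private lemma proj_diag_nonneg {n : ℕ} (Pm : Matrix (Fin n) (Fin n) ℝ) (hsym : Pmᵀ = Pm)
    (hidem : Pm * Pm = Pm) (k : Fin n) : 0 ≤ Pm k k := by
  rw [← proj_col_sq Pm hsym hidem k]; positivity

private lemma proj_diag_le_one {n : ℕ} (Pm : Matrix (Fin n) (Fin n) ℝ) (hsym : Pmᵀ = Pm)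
    (hidem : Pm * Pm = Pm) (k : Fin n) : Pm k k ≤ 1 := by
  have h1 : Pm k k ^ 2 ≤ ∑ l, Pm l k ^ 2 :=
    Finset.single_le_sum (f := fun l => Pm l k ^ 2) (fun l _ => sq_nonneg _) (Finset.mem_univ k)
  rw [proj_col_sq Pm hsym hidem k] at h1
  nlinarith

private lemma proj_entry_sq {n : ℕ} (Pm : Matrix (Fin n) (Fin n) ℝ) (hsym : Pmᵀ = Pm)
    (hidem : Pm * Pm = Pm) (i k : Fin n) : Pm i k ^ 2 ≤ Pm i i * Pm k k := by
  have h : Pm i k = ∑ l, Pm i l * Pm l k := by rw [← Matrix.mul_apply, hidem]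
  have h2 := cs_sum (fun l => Pm i l) (fun l => Pm l k)
  rw [← h] at h2
  have h3 : ∑ l, Pm i l ^ 2 = Pm i i := by
    have : ∀ l, Pm i l = Pm l i := by
      intro l
      calc Pm i l = Pmᵀ l i := rfl
        _ = Pm l i := by rw [hsym]
    rw [Finset.sum_congr rfl fun l _ => by rw [this l]]
    exact proj_col_sq Pm hsym hidem i
  rw [h3, proj_col_sq Pm hsym hidem k] at h2
  exact h2


/-- The two-to-infinity norm of a matrix: the maximum Euclidean norm of a row. -/
noncomputable def tti {n d : ℕ} (A : Matrix (Fin n) (Fin d) ℝ) : ℝ :=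
  ⨆ i : Fin n, Real.sqrt (∑ j, (A i j) ^ 2)

/-- Two-to-infinity bound on the leading left singular subspace of `U₀ + eᵢ xᵀ`: if `U₀` has
orthonormal columns with `‖U₀‖_{2,∞} ≤ √(d/(n-r))`, `‖x‖₂ < 1`, and `Ut` is a matrix whose
columns are an orthonormal basis of the leading (rank-`d`) left singular subspace of
`G = U₀ + eᵢ xᵀ` (i.e. `UtᵀUt = I` and the column space of `G` is contained in that of `Ut`),
then `‖Ut‖_{2,∞} ≤ √(d/(n-r) + ‖x‖₂/(1-‖x‖₂))`. -/
theorem tti_leading_singular_subspace {n d r : ℕ} (hr : r < n - d) (i : Fin n)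
    (U₀ Ut : Matrix (Fin n) (Fin d) ℝ) (x : Fin d → ℝ)
    (hU : U₀ᵀ * U₀ = 1)
    (hU0tti : tti U₀ ≤ Real.sqrt ((d : ℝ) / (n - r)))
    (hx : Real.sqrt (∑ j, (x j) ^ 2) < 1)
    (hUt : Utᵀ * Ut = 1)
    (hspan : Ut * Utᵀ * (U₀ + Matrix.of fun k j => if k = i then x j else 0) =
      U₀ + Matrix.of fun k j => if k = i then x j else 0) :
    tti Ut ≤ Real.sqrt ((d : ℝ) / (n - r) +
      Real.sqrt (∑ j, (x j) ^ 2) / (1 - Real.sqrt (∑ j, (x j) ^ 2))) := by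
  set t := Real.sqrt (∑ j, (x j) ^ 2) with ht_def
  have ht0 : 0 ≤ t := Real.sqrt_nonneg _
  have ht1 : t < 1 := hx
  have htx : ∑ j, x j ^ 2 = t ^ 2 := (Real.sq_sqrt (by positivity)).symm
  set ε := t / (1 - t) with hε_def
  have h1t : (0:ℝ) < 1 - t := by linarith
  have hε0 : 0 ≤ ε := div_nonneg ht0 h1t.le
  have htε : t ≤ ε := by
    rw [hε_def, le_div_iff₀ h1t]; nlinarith
  set E : Matrix (Fin n) (Fin d) ℝ := Matrix.of fun k j => if k = i then x j else 0 with hE_def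
  set G : Matrix (Fin n) (Fin d) ℝ := U₀ + E with hG_def
  set Q : Matrix (Fin n) (Fin n) ℝ := U₀ * U₀ᵀ with hQ_def
  set P : Matrix (Fin n) (Fin n) ℝ := Ut * Utᵀ with hP_def
  set M : Matrix (Fin d) (Fin d) ℝ := Gᵀ * G with hM_def
  -- basic matrix facts
  have hQQ : Q * Q = Q := by
    rw [hQ_def, Matrix.mul_assoc, ← Matrix.mul_assoc U₀ᵀ, hU, Matrix.one_mul]
  have hPP : P * P = P := by
    rw [hP_def, Matrix.mul_assoc, ← Matrix.mul_assoc Utᵀ, hUt, Matrix.one_mul]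
  have hQT : Qᵀ = Q := by rw [hQ_def, Matrix.transpose_mul, Matrix.transpose_transpose]
  have hPT : Pᵀ = P := by rw [hP_def, Matrix.transpose_mul, Matrix.transpose_transpose]
  have hPG : P * G = G := hspan
  have hUtQ : U₀ᵀ * Q = U₀ᵀ := by
    rw [hQ_def, ← Matrix.mul_assoc, hU, Matrix.one_mul]
  -- dot product identity for M
  have hMdot : ∀ v : Fin d → ℝ, v ⬝ᵥ (M *ᵥ v) = ∑ l, (G *ᵥ v) l ^ 2 := by
    intro v
    rw [hM_def, ← Matrix.mulVec_mulVec, Matrix.dotProduct_mulVec, Matrix.vecMul_transpose]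
    simp [dotProduct, sq]
  -- lower bound for ‖Gv‖
  have hU0norm : ∀ v : Fin d → ℝ, ∑ l, (U₀ *ᵥ v) l ^ 2 = ∑ j, v j ^ 2 := by
    intro v
    have : ∑ l, (U₀ *ᵥ v) l ^ 2 = v ⬝ᵥ ((U₀ᵀ * U₀) *ᵥ v) := by
      rw [← Matrix.mulVec_mulVec, Matrix.dotProduct_mulVec, Matrix.vecMul_transpose]
      simp [dotProduct, sq]
    rw [this, hU]
    simp [dotProduct, sq]
  have hEv : ∀ v : Fin d → ℝ, (E *ᵥ v) = fun l => if l = i then ∑ j, x j * v j else 0 := by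
    intro v; funext l
    simp only [Matrix.mulVec, hE_def, Matrix.of_apply, dotProduct]
    by_cases h : l = i <;> simp [h]
  have hGlower : ∀ v : Fin d → ℝ,
      (1 - t) * Real.sqrt (∑ j, v j ^ 2) ≤ Real.sqrt (∑ l, (G *ᵥ v) l ^ 2) := by
    intro v
    have hGv : G *ᵥ v = fun l => (U₀ *ᵥ v) l + (E *ᵥ v) l := by
      funext l; rw [hG_def, Matrix.add_mulVec]; rfl
    have hEnorm : ∑ l, (E *ᵥ v) l ^ 2 = (∑ j, x j * v j) ^ 2 := by
      rw [hEv v]; simp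
    have hEle : Real.sqrt (∑ l, (E *ᵥ v) l ^ 2) ≤ t * Real.sqrt (∑ j, v j ^ 2) := by
      rw [hEnorm, Real.sqrt_sq_eq_abs, ht_def]
      exact abs_sum_mul_le x v
    have htri := rev_triangle (fun l => (U₀ *ᵥ v) l) (fun l => (E *ᵥ v) l)
    rw [hU0norm v] at htri
    have : Real.sqrt (∑ j, v j ^ 2) - t * Real.sqrt (∑ j, v j ^ 2) ≤
        Real.sqrt (∑ l, ((U₀ *ᵥ v) l + (E *ᵥ v) l) ^ 2) := by
      refine le_trans ?_ htri
      linarith [hEle]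
    calc (1 - t) * Real.sqrt (∑ j, v j ^ 2)
        = Real.sqrt (∑ j, v j ^ 2) - t * Real.sqrt (∑ j, v j ^ 2) := by ring
      _ ≤ Real.sqrt (∑ l, ((U₀ *ᵥ v) l + (E *ᵥ v) l) ^ 2) := this
      _ = Real.sqrt (∑ l, (G *ᵥ v) l ^ 2) := by rw [hGv]
  -- M is positive definite, hence invertible
  have hMposdef : M.PosDef := by
    rw [Matrix.posDef_iff_dotProduct_mulVec]
    constructor
    · show Mᴴ = M
      ext a b
      simp only [Matrix.conjTranspose_apply, hM_def, Matrix.mul_apply, Matrix.transpose_apply,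
        star_trivial]
      exact Finset.sum_congr rfl fun _ _ => mul_comm _ _
    · intro v hv
      have hv2 : 0 < ∑ j, v j ^ 2 := by
        have : ∃ j, v j ≠ 0 := by
          by_contra h
          push_neg at h
          exact hv (funext h)
        obtain ⟨j, hj⟩ := this
        have : 0 < v j ^ 2 := by positivity
        exact Finset.sum_pos' (fun _ _ => sq_nonneg _) ⟨j, Finset.mem_univ j, this⟩
      have h1 := hGlower v
      have h2 : 0 < (1 - t) * Real.sqrt (∑ j, v j ^ 2) := by
        apply mul_pos h1t (Real.sqrt_pos.mpr hv2)
      have h3 : 0 < Real.sqrt (∑ l, (G *ᵥ v) l ^ 2) := lt_of_lt_of_le h2 h1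
      have h4 : 0 < ∑ l, (G *ᵥ v) l ^ 2 := by
        by_contra h
        push_neg at h
        have : Real.sqrt (∑ l, (G *ᵥ v) l ^ 2) = 0 := by
          rcases lt_or_eq_of_le h with h' | h'
          · exact Real.sqrt_eq_zero_of_nonpos h'.le
          · rw [h']; exact Real.sqrt_zero
        rw [this] at h3; exact lt_irrefl _ h3
      show 0 < star v ⬝ᵥ (M *ᵥ v)
      rw [star_trivial, hMdot v]
      exact h4
  have hMdet : IsUnit M.det := isUnit_iff_ne_zero.mpr hMposdef.det_pos.ne'
  have hMMi : M * M⁻¹ = 1 := Matrix.mul_nonsing_inv M hMdet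
  -- R and the representation P = G M⁻¹ Gᵀ
  set R : Matrix (Fin d) (Fin d) ℝ := Utᵀ * G with hR_def
  have hGR : G = Ut * R := by
    rw [hR_def, ← Matrix.mul_assoc]
    exact hPG.symm
  have hMRR : M = Rᵀ * R := by
    rw [hM_def]
    conv_lhs => rw [hGR]
    rw [Matrix.transpose_mul, Matrix.mul_assoc, ← Matrix.mul_assoc Utᵀ Ut, hUt, Matrix.one_mul]
  have hRdet : IsUnit R.det := by
    have : M.det = R.det * R.det := by
      rw [hMRR, Matrix.det_mul, Matrix.det_transpose]
    rw [this] at hMdet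
    exact (IsUnit.mul_iff.mp hMdet).1
  have hUtGR : Ut = G * R⁻¹ := by
    rw [hGR, Matrix.mul_assoc, Matrix.mul_nonsing_inv R hRdet, Matrix.mul_one]
  have hPrep : P = G * M⁻¹ * Gᵀ := by
    rw [hP_def, hUtGR, Matrix.transpose_mul, hMRR, Matrix.mul_inv_rev,
      Matrix.transpose_nonsing_inv]
    rw [Matrix.mul_assoc, Matrix.mul_assoc, Matrix.mul_assoc]
  -- the vector w and its bound
  set z : Fin d → ℝ := M⁻¹ *ᵥ x with hz_def
  set w : Fin n → ℝ := G *ᵥ z with hw_def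
  have hMz : M *ᵥ z = x := by
    rw [hz_def, Matrix.mulVec_mulVec, hMMi, Matrix.one_mulVec]
  have hw_sq : ∑ l, w l ^ 2 = z ⬝ᵥ x := by
    rw [hw_def, ← hMdot z, hMz]
  have hw_bound : ∑ l, w l ^ 2 ≤ ε ^ 2 := by
    set nw := Real.sqrt (∑ l, w l ^ 2) with hnw
    set nz := Real.sqrt (∑ j, z j ^ 2) with hnz
    have hnw2 : nw ^ 2 = ∑ l, w l ^ 2 := Real.sq_sqrt (by positivity)
    have hzx : z ⬝ᵥ x ≤ t * nz := by
      have h := abs_sum_mul_le z x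
      rw [← ht_def] at h
      calc z ⬝ᵥ x ≤ |∑ j, z j * x j| := le_abs_self _
        _ ≤ nz * t := h
        _ = t * nz := mul_comm _ _
    have hlow : (1 - t) * nz ≤ nw := hGlower z
    have hnww : nw ^ 2 ≤ t * nz := by rw [hnw2, hw_sq]; exact hzx
    have hnw0 : 0 ≤ nw := Real.sqrt_nonneg _
    have hnz0 : 0 ≤ nz := Real.sqrt_nonneg _
    have hle : nw ≤ ε := arith_nw ht0 h1t hnw0 hnz0 hnww hlow
    calc ∑ l, w l ^ 2 = nw ^ 2 := hnw2.symm
      _ ≤ ε ^ 2 := pow_le_pow_left₀ hnw0 hle 2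
  -- structure of A = P (1 - Q)
  have hGTQ : Gᵀ * (1 - Q) = Eᵀ * (1 - Q) := by
    rw [hG_def, Matrix.transpose_add, Matrix.add_mul]
    have : U₀ᵀ * (1 - Q) = 0 := by
      rw [Matrix.mul_sub, Matrix.mul_one, hUtQ, sub_self]
    rw [this, zero_add]
  have hA_entry : ∀ k' l, (P * (1 - Q)) k' l = w k' * (1 - Q) i l := by
    intro k' l
    have h1 : P * (1 - Q) = (G * M⁻¹) * (Eᵀ * (1 - Q)) := by
      rw [hPrep, Matrix.mul_assoc, hGTQ, ← Matrix.mul_assoc]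
    have h2 : ∀ (j : Fin d) (l' : Fin n), ((Eᵀ * (1 - Q) : Matrix (Fin d) (Fin n) ℝ)) j l' = x j * (1 - Q) i l' := by
      intro j l'
      simp only [Matrix.mul_apply, Matrix.transpose_apply, hE_def, Matrix.of_apply]
      rw [Finset.sum_eq_single i]
      · simp
      · intro b _ hb; simp [hb]
      · intro h; exact absurd (Finset.mem_univ i) h
    rw [h1, Matrix.mul_apply]
    have h3 : ∀ j : Fin d, (G * M⁻¹) k' j * ((Eᵀ * (1 - Q) : Matrix (Fin d) (Fin n) ℝ)) j l
        = ((G * M⁻¹) k' j * x j) * (1 - Q) i l := by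
      intro j; rw [h2 j l]; ring
    rw [Finset.sum_congr rfl fun j _ => h3 j, ← Finset.sum_mul]
    congr 1
    rw [hw_def, hz_def, Matrix.mulVec_mulVec]
    simp [Matrix.mulVec, dotProduct]
  -- structure of B = (1 - P) Q
  set y : Fin n → ℝ := U₀ *ᵥ x with hy_def
  have hB_entry : ∀ k' l, ((1 - P) * Q) k' l = -((1 - P) k' i * y l) := by
    intro k' l
    have h0 : (1 - P) * U₀ = -((1 - P) * E) := by
      have : (1 - P) * G = 0 := by
        rw [Matrix.sub_mul, Matrix.one_mul, hPG, sub_self]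
      rw [hG_def, Matrix.mul_add] at this
      linear_combination (norm := noncomm_ring) this
    have h1 : (1 - P) * Q = -((1 - P) * E * U₀ᵀ) := by
      rw [hQ_def, ← Matrix.mul_assoc, h0, Matrix.neg_mul]
    rw [h1]
    simp only [Matrix.neg_apply, neg_inj]
    have h2 : ∀ (k'' : Fin n) (j : Fin d), (((1 - P) * E : Matrix (Fin n) (Fin d) ℝ)) k'' j = (1 - P) k'' i * x j := by
      intro k'' j
      simp only [Matrix.mul_apply, hE_def, Matrix.of_apply]
      rw [Finset.sum_eq_single i]
      · simp
      · intro b _ hb; simp [hb]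
      · intro h; exact absurd (Finset.mem_univ i) h
    rw [Matrix.mul_apply]
    rw [Finset.sum_congr rfl fun j _ => by rw [h2 k' j, Matrix.transpose_apply]]
    rw [hy_def]
    simp only [Matrix.mulVec, dotProduct]
    rw [Finset.mul_sum]
    exact Finset.sum_congr rfl fun j _ => by ring
  -- symmetric idempotent complements
  have hOneQsym : (1 - Q)ᵀ = 1 - Q := by rw [Matrix.transpose_sub, Matrix.transpose_one, hQT]
  have hOnePsym : (1 - P)ᵀ = 1 - P := by rw [Matrix.transpose_sub, Matrix.transpose_one, hPT]
  have hOneQidem : (1 - Q) * (1 - Q) = 1 - Q := by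
    simp only [Matrix.mul_sub, Matrix.sub_mul, Matrix.mul_one, Matrix.one_mul, hQQ]
    abel
  have hOnePidem : (1 - P) * (1 - P) = 1 - P := by
    simp only [Matrix.mul_sub, Matrix.sub_mul, Matrix.mul_one, Matrix.one_mul, hPP]
    abel
  -- cross term vanishes
  have hABzero : (P * (1 - Q))ᵀ * ((1 - P) * Q) = 0 := by
    have hP1P : P * (1 - P) = 0 := by
      rw [Matrix.mul_sub, Matrix.mul_one, hPP, sub_self]
    rw [Matrix.transpose_mul, hPT, hOneQsym]
    calc (1 - Q) * P * ((1 - P) * Q) = (1 - Q) * (P * (1 - P)) * Q := by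
          rw [Matrix.mul_assoc (1 - Q) (P * (1 - P)) Q, Matrix.mul_assoc P (1 - P) Q,
            Matrix.mul_assoc (1 - Q) P ((1 - P) * Q)]
      _ = 0 := by rw [hP1P, Matrix.mul_zero, Matrix.zero_mul]
  -- numeric bound n - r > 0
  have hrd : r + d < n := by omega
  have hnr : (0:ℝ) < (n:ℝ) - r := by
    have : (r:ℝ) < (n:ℝ) := by exact_mod_cast (by omega : r < n)
    linarith
  have hdnr0 : (0:ℝ) ≤ (d:ℝ) / ((n:ℝ) - r) := div_nonneg (Nat.cast_nonneg d) hnr.le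
  -- per-row bound
  have hrow : ∀ k : Fin n, ∑ j, Ut k j ^ 2 ≤ (d:ℝ) / ((n:ℝ) - r) + ε := by
    intro k
    set q := ∑ j, U₀ k j ^ 2 with hq_def
    have hQkk : Q k k = q := by
      rw [hQ_def, Matrix.mul_apply, hq_def]
      exact Finset.sum_congr rfl fun j _ => by rw [Matrix.transpose_apply]; ring
    have hPkk : P k k = ∑ j, Ut k j ^ 2 := by
      rw [hP_def, Matrix.mul_apply]
      exact Finset.sum_congr rfl fun j _ => by rw [Matrix.transpose_apply]; ring
    have hq0 : 0 ≤ q := by positivity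
    have hq1 : q ≤ 1 := by
      rw [← hQkk]; exact proj_diag_le_one Q hQT hQQ k
    -- q ≤ d / (n - r)
    have hq_le : q ≤ (d:ℝ) / ((n:ℝ) - r) := by
      have h1 : Real.sqrt q ≤ tti U₀ := by
        unfold tti
        exact le_ciSup (f := fun k' : Fin n => Real.sqrt (∑ j, U₀ k' j ^ 2))
          (Set.Finite.bddAbove (Set.finite_range _)) k
      have h2 : Real.sqrt q ≤ Real.sqrt ((d:ℝ) / ((n:ℝ) - r)) := le_trans h1 hU0tti
      calc q = Real.sqrt q ^ 2 := (Real.sq_sqrt hq0).symm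
        _ ≤ Real.sqrt ((d:ℝ) / ((n:ℝ) - r)) ^ 2 :=
            pow_le_pow_left₀ (Real.sqrt_nonneg q) h2 2
        _ = (d:ℝ) / ((n:ℝ) - r) := Real.sq_sqrt hdnr0
    -- the sum of squares of the k-th column of P - Q
    have hsplit : ∀ l, (P - Q) l k = (P * (1 - Q)) l k - ((1 - P) * Q) l k := by
      intro l
      have hSAB : P - Q = P * (1 - Q) - (1 - P) * Q := by
        rw [Matrix.mul_sub, Matrix.sub_mul, Matrix.mul_one, Matrix.one_mul]
        abel
      rw [hSAB, Matrix.sub_apply]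
    have hcross : ∑ l, (P * (1 - Q)) l k * ((1 - P) * Q) l k = 0 := by
      have : ∑ l, (P * (1 - Q)) l k * ((1 - P) * Q) l k
          = (((P * (1 - Q))ᵀ * ((1 - P) * Q) : Matrix (Fin n) (Fin n) ℝ)) k k := by
        rw [Matrix.mul_apply]
        exact Finset.sum_congr rfl fun l _ => by rw [Matrix.transpose_apply]
      rw [this, hABzero, Matrix.zero_apply]
    have hsum_split : ∑ l, ((P - Q) l k) ^ 2
        = (∑ l, ((P * (1 - Q)) l k) ^ 2) + ∑ l, (((1 - P) * Q) l k) ^ 2 := by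
      have h1 : ∀ l, ((P - Q) l k) ^ 2 = ((P * (1 - Q)) l k) ^ 2
          - 2 * ((P * (1 - Q)) l k * ((1 - P) * Q) l k) + (((1 - P) * Q) l k) ^ 2 := by
        intro l; rw [hsplit l]; ring
      rw [Finset.sum_congr rfl fun l _ => h1 l]
      rw [Finset.sum_add_distrib, Finset.sum_sub_distrib, ← Finset.mul_sum, hcross]
      ring
    -- bound the two pieces
    have hc2 : ((1 - Q) i k) ^ 2 ≤ 1 - q := by
      have h1 := proj_entry_sq (1 - Q) hOneQsym hOneQidem i k
      have h2 : (1 - Q) i i ≤ 1 := proj_diag_le_one (1 - Q) hOneQsym hOneQidem i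
      have h3 : (0:ℝ) ≤ (1 - Q) i i := proj_diag_nonneg (1 - Q) hOneQsym hOneQidem i
      have h4 : (1 - Q) k k = 1 - q := by
        rw [Matrix.sub_apply, Matrix.one_apply_eq, hQkk]
      have h5 : (0:ℝ) ≤ (1 - Q) k k := proj_diag_nonneg (1 - Q) hOneQsym hOneQidem k
      rw [h4] at h1 h5
      calc ((1 - Q) i k) ^ 2 ≤ (1 - Q) i i * (1 - q) := h1
        _ ≤ 1 * (1 - q) := mul_le_mul_of_nonneg_right h2 h5
        _ = 1 - q := one_mul _
    have hApart : ∑ l, ((P * (1 - Q)) l k) ^ 2 ≤ ε ^ 2 * (1 - q) := by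
      have h1 : ∀ l : Fin n, ((P * (1 - Q)) l k) ^ 2 = w l ^ 2 * ((1 - Q) i k) ^ 2 := by
        intro l; rw [hA_entry l k]; ring
      rw [Finset.sum_congr rfl fun l _ => h1 l, ← Finset.sum_mul]
      have h2 : (0:ℝ) ≤ ((1 - Q) i k) ^ 2 := sq_nonneg _
      calc (∑ l, w l ^ 2) * ((1 - Q) i k) ^ 2 ≤ ε ^ 2 * ((1 - Q) i k) ^ 2 :=
            mul_le_mul_of_nonneg_right hw_bound h2
        _ ≤ ε ^ 2 * (1 - q) := mul_le_mul_of_nonneg_left hc2 (by positivity)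
    have hyk : y k ^ 2 ≤ q * t ^ 2 := by
      have h1 : y k = ∑ j, U₀ k j * x j := by
        rw [hy_def]; rfl
      rw [h1]
      calc (∑ j, U₀ k j * x j) ^ 2 ≤ (∑ j, U₀ k j ^ 2) * ∑ j, x j ^ 2 := cs_sum _ _
        _ = q * t ^ 2 := by rw [htx]
    have hBpart : ∑ l, (((1 - P) * Q) l k) ^ 2 ≤ q * t ^ 2 := by
      have h1 : ∀ l : Fin n, (((1 - P) * Q) l k) ^ 2 = ((1 - P) l i) ^ 2 * y k ^ 2 := by
        intro l; rw [hB_entry l k]; ring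
      rw [Finset.sum_congr rfl fun l _ => h1 l, ← Finset.sum_mul]
      have h2 : ∑ l, ((1 - P) l i) ^ 2 = (1 - P) i i := proj_col_sq (1 - P) hOnePsym hOnePidem i
      have h3 : (1 - P) i i ≤ 1 := proj_diag_le_one (1 - P) hOnePsym hOnePidem i
      have h4 : (0:ℝ) ≤ (1 - P) i i := proj_diag_nonneg (1 - P) hOnePsym hOnePidem i
      rw [h2]
      calc (1 - P) i i * y k ^ 2 ≤ 1 * y k ^ 2 :=
            mul_le_mul_of_nonneg_right h3 (sq_nonneg _)
        _ = y k ^ 2 := one_mul _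
        _ ≤ q * t ^ 2 := hyk
    have hcol : ∑ l, ((P - Q) l k) ^ 2 ≤ ε ^ 2 := by
      rw [hsum_split]
      have ht2ε2 : t ^ 2 ≤ ε ^ 2 := pow_le_pow_left₀ ht0 htε 2
      have e1 : q * t ^ 2 ≤ q * ε ^ 2 := mul_le_mul_of_nonneg_left ht2ε2 hq0
      have e2 : ε ^ 2 * (1 - q) + q * ε ^ 2 = ε ^ 2 := by ring
      linarith [hApart, hBpart, e1, e2]
    -- conclude
    have hdiag : (P - Q) k k ≤ ε := by
      have h1 : ((P - Q) k k) ^ 2 ≤ ∑ l, ((P - Q) l k) ^ 2 :=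
        Finset.single_le_sum (f := fun l => ((P - Q) l k) ^ 2) (fun l _ => sq_nonneg _)
          (Finset.mem_univ k)
      have h2 : ((P - Q) k k) ^ 2 ≤ ε ^ 2 := le_trans h1 hcol
      have h3 := Real.sqrt_le_sqrt h2
      rw [Real.sqrt_sq hε0] at h3
      calc (P - Q) k k ≤ |(P - Q) k k| := le_abs_self _
        _ = Real.sqrt (((P - Q) k k) ^ 2) := (Real.sqrt_sq_eq_abs _).symm
        _ ≤ ε := h3
    have h3 : (P - Q) k k = (∑ j, Ut k j ^ 2) - q := by
      rw [Matrix.sub_apply, hPkk, hQkk]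
    rw [h3] at hdiag
    linarith
  -- finish: take sup over rows
  have : Nonempty (Fin n) := ⟨i⟩
  show (⨆ k : Fin n, Real.sqrt (∑ j, Ut k j ^ 2)) ≤ _
  apply ciSup_le
  intro k
  exact Real.sqrt_le_sqrt (hrow k)
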